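/- Let p be a prime, let R_i (i ≥ 0) be commutative rings of characteristic p, t_i : R_i → R_{i+1} injective ring homomorphisms, and F_i : R_{i+1} → R_i bijective ring homomorphisms such that t_i ∘ F_i equals the Frobenius endomorphism x ↦ x^p of R_{i+1} (equivalently, (R_i, t_i) is a perfectoid tower arising from (R_0, (0)), i.e., a perfect tower). Fix f ∈ R_0, let f_i denote its image in R_i, and for each i let the transition map R_{i+1}/f_{i+1}R_{i+1} → R_i/f_iR_i be the ring map induced by F_i (well defined since F_i(f_{i+1}) = f_i^p). Then for every j ≥ 0 the inverse limit of the system ⋯ → R_{j+1}/f_{j+1}R_{j+1} → R_j/f_jR_j along these transition maps is isomorphic, as a ring, to the f_j-adic completion lim_n R_j/f_j^nR_j of R_j. -/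

import Mathlib

set_option synthInstance.maxHeartbeats 1000000
set_option maxHeartbeats 1000000

universe u

namespace PaperTower

/-- The inverse limit of a tower of rings `⋯ → A (i+1) → A i → ⋯ → A 0`, as a subring of
the product. -/
def invLim (A : ℕ → Type u) [∀ i, CommRing (A i)] (g : ∀ i, A (i + 1) →+* A i) :
    Subring (∀ i, A i) where
  carrier := {a | ∀ i, g i (a (i + 1)) = a i}
  zero_mem' := by
    intro i
    show g i 0 = 0
    simp
  one_mem' := by
    intro i
    show g i 1 = 1
    simp
  add_mem' := by
    intro a b ha hb i
    show g i (a (i + 1) + b (i + 1)) = a i + b i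
    rw [map_add, ha i, hb i]
  mul_mem' := by
    intro a b ha hb i
    show g i (a (i + 1) * b (i + 1)) = a i * b i
    rw [map_mul, ha i, hb i]
  neg_mem' := by
    intro a ha i
    show g i (-(a (i + 1))) = -(a i)
    rw [map_neg, ha i]

section Aux

variable (R : ℕ → Type u) [∀ i, CommRing (R i)] (F : ∀ i, R (i + 1) →+* R i) (j : ℕ)

/-- Composite `F j ∘ ⋯ ∘ F (j+i-1) : R (j+i) →+* R j`. -/
def Phi : ∀ i, R (j + i) →+* R j
  | 0 => RingHom.id _
  | (i + 1) => (Phi i).comp (F (j + i))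

lemma Phi_bijective (h : ∀ i, Function.Bijective (F i)) :
    ∀ i, Function.Bijective (Phi R F j i)
  | 0 => Function.bijective_id
  | (i + 1) => (Phi_bijective h i).comp (h (j + i))

lemma Phi_fs (p : ℕ) (fs : ∀ i, R i) (hFf : ∀ i, F i (fs (i + 1)) = fs i ^ p) :
    ∀ i, Phi R F j i (fs (j + i)) = fs j ^ p ^ i
  | 0 => by simp [Phi]
  | (i + 1) => by
    show Phi R F j i (F (j + i) (fs (j + i + 1))) = _
    rw [hFf, map_pow, Phi_fs p fs hFf i, ← pow_mul, ← pow_succ]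

end Aux

/-- For a perfect tower of `𝔽_p`-algebras `(R_i, t_i)` with bijective
Frobenius projections `F_i` (satisfying `t_i ∘ F_i = Frobenius`), an element `f ∈ R_0`
with images `f_i ∈ R_i`, and the induced transition maps
`G_i : R_{i+1}/f_{i+1}R_{i+1} → R_i/f_iR_i`, the inverse limit of the system
`⋯ → R_{j+1}/f_{j+1}R_{j+1} → R_j/f_jR_j` is isomorphic, as a ring, to the `f_j`-adic
completion `lim_n R_j/f_j^nR_j` of `R_j`. -/
theorem stmt19 (p : ℕ) (hp : p.Prime)
    (R : ℕ → Type u) [∀ i, CommRing (R i)]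
    (hchar : ∀ i, CharP (R i) p)
    (t : ∀ i, R i →+* R (i + 1))
    (htInj : ∀ i, Function.Injective (t i))
    (F : ∀ i, R (i + 1) →+* R i)
    (hFbij : ∀ i, Function.Bijective (F i))
    (hF : ∀ i (x : R (i + 1)), t i (F i x) = x ^ p)
    (f : R 0) (fs : ∀ i, R i)
    (hfs0 : fs 0 = f)
    (hfsS : ∀ i, fs (i + 1) = t i (fs i))
    (G : ∀ i, (R (i + 1) ⧸ Ideal.span {fs (i + 1)}) →+* (R i ⧸ Ideal.span {fs i}))
    (hG : ∀ i (x : R (i + 1)),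
      G i (Ideal.Quotient.mk (Ideal.span {fs (i + 1)}) x)
        = Ideal.Quotient.mk (Ideal.span {fs i}) (F i x))
    (j : ℕ) :
    Nonempty
      ((invLim (fun i => R (j + i) ⧸ Ideal.span {fs (j + i)}) (fun i => G (j + i))) ≃+*
        (invLim (fun n => R j ⧸ Ideal.span {fs j} ^ n)
          (fun n => Ideal.Quotient.factor (S := Ideal.span {fs j} ^ (n + 1))
            (T := Ideal.span {fs j} ^ n) (Ideal.pow_le_pow_right (Nat.le_succ n))))) := by
  -- `F i` sends `f_{i+1}` to `f_i ^ p`.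
  have hFf : ∀ i, F i (fs (i + 1)) = fs i ^ p := fun i =>
    htInj i (by rw [hF, map_pow, ← hfsS])
  -- the composite Frobenii, as ring isomorphisms
  let Φ : ∀ i, R (j + i) ≃+* R j := fun i =>
    RingEquiv.ofBijective (Phi R F j i) (Phi_bijective R F j hFbij i)
  have hmap : ∀ i, (Ideal.span {fs j} ^ (p ^ i) : Ideal (R j)) =
      (Ideal.span {fs (j + i)}).map ((Φ i : R (j + i) →+* R j)) := by
    intro i
    rw [Ideal.map_span, Set.image_singleton, Ideal.span_singleton_pow]
    congr 1
    exact congrArg _ (Phi_fs R F j p fs hFf i).symm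
  -- the induced isomorphisms on quotients
  let e : ∀ i, (R (j + i) ⧸ Ideal.span {fs (j + i)}) ≃+* (R j ⧸ Ideal.span {fs j} ^ (p ^ i)) :=
    fun i => Ideal.quotientEquiv _ _ (Φ i) (hmap i)
  -- composing `factor` maps
  have hcomp : ∀ (S T U : Ideal (R j)) (h1 : S ≤ T) (h2 : T ≤ U)
      (x : R j ⧸ S), Ideal.Quotient.factor (S := T) (T := U) h2 (Ideal.Quotient.factor (S := S) (T := T) h1 x)
        = Ideal.Quotient.factor (S := S) (T := U) (h1.trans h2) x := by
    intro S T U h1 h2 x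
    obtain ⟨y, rfl⟩ := Ideal.Quotient.mk_surjective x
    simp only [Ideal.Quotient.factor_mk]
  -- one-step commutation
  have hstep : ∀ (k : ℕ) (x : R (j + k + 1) ⧸ Ideal.span {fs (j + k + 1)}),
      Ideal.Quotient.factor
        (Ideal.pow_le_pow_right (Nat.pow_le_pow_right hp.one_le (Nat.le_succ k)))
        (e (k + 1) x) = e k (G (j + k) x) := by
    intro k x
    obtain ⟨y, rfl⟩ := Ideal.Quotient.mk_surjective x
    rw [hG]
    show Ideal.Quotient.factor _
        ((e (k + 1)) (Ideal.Quotient.mk (Ideal.span {fs (j + (k + 1))}) y)) = _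
    rw [Ideal.quotientEquiv_mk, Ideal.quotientEquiv_mk, Ideal.Quotient.factor_mk]
    rfl
  -- transitivity of factor along elements of the completion inverse limit
  set C := invLim (fun n => R j ⧸ Ideal.span {fs j} ^ n)
      (fun n => Ideal.Quotient.factor (S := Ideal.span {fs j} ^ (n + 1))
        (T := Ideal.span {fs j} ^ n) (Ideal.pow_le_pow_right (Nat.le_succ n))) with hC
  set L := invLim (fun i => R (j + i) ⧸ Ideal.span {fs (j + i)}) (fun i => G (j + i)) with hL
  have htrans : ∀ (b : ∀ n, R j ⧸ Ideal.span {fs j} ^ n), b ∈ C →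
      ∀ (m n : ℕ) (h : m ≤ n),
        Ideal.Quotient.factor (Ideal.pow_le_pow_right h) (b n) = b m := by
    intro b hb m n h
    have hb' : ∀ i, Ideal.Quotient.factor (S := Ideal.span {fs j} ^ (i + 1))
        (T := Ideal.span {fs j} ^ i) (Ideal.pow_le_pow_right (Nat.le_succ i)) (b (i + 1)) = b i := hb
    induction n, h using Nat.le_induction with
    | base =>
      obtain ⟨y, hy⟩ := Ideal.Quotient.mk_surjective (b m)
      rw [← hy, Ideal.Quotient.factor_mk]
    | succ n hmn ih =>
      rw [← ih, ← hb' n, hcomp]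
  -- commutation along elements of L
  have hEA : ∀ (a : ∀ i, R (j + i) ⧸ Ideal.span {fs (j + i)}), a ∈ L →
      ∀ (i k : ℕ) (h : i ≤ k),
        Ideal.Quotient.factor
          (Ideal.pow_le_pow_right (Nat.pow_le_pow_right hp.one_le h))
          (e k (a k)) = e i (a i) := by
    intro a ha i k h
    have ha' : ∀ i, G (j + i) (a (i + 1)) = a i := ha
    induction k, h using Nat.le_induction with
    | base =>
      obtain ⟨y, hy⟩ := Ideal.Quotient.mk_surjective (e i (a i))
      rw [← hy, Ideal.Quotient.factor_mk]
    | succ k hik ih =>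
      rw [← ih, ← hcomp _ _ _
        (Ideal.pow_le_pow_right (Nat.pow_le_pow_right hp.one_le (Nat.le_succ k)))
        (Ideal.pow_le_pow_right (Nat.pow_le_pow_right hp.one_le hik)),
        hstep, ha' k]
  have hle1 : ∀ n : ℕ, n ≤ p ^ n := fun n => (Nat.lt_pow_self (n := n) hp.one_lt).le
  refine ⟨{
    toFun := fun a => ⟨fun n => Ideal.Quotient.factor
        (Ideal.pow_le_pow_right (hle1 n)) (e n (a.1 n)), ?_⟩
    invFun := fun b => ⟨fun i => (e i).symm (b.1 (p ^ i)), ?_⟩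
    left_inv := ?_
    right_inv := ?_
    map_mul' := ?_
    map_add' := ?_ }⟩
  · have ha' : ∀ i, G (j + i) (a.1 (i + 1)) = a.1 i := a.2
    intro n
    show Ideal.Quotient.factor _ (Ideal.Quotient.factor _ (e (n + 1) (a.1 (n + 1))))
      = Ideal.Quotient.factor (Ideal.pow_le_pow_right (hle1 n)) (e n (a.1 n))
    rw [hcomp, ← hcomp _ (Ideal.span {fs j} ^ (p ^ n)) _
      (Ideal.pow_le_pow_right (Nat.pow_le_pow_right hp.one_le (Nat.le_succ n)))
      (Ideal.pow_le_pow_right (hle1 n)), hstep, ha' n]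
  · intro i
    apply (e i).injective
    show e i (G (j + i) ((e (i + 1)).symm (b.1 (p ^ (i + 1))))) = _
    rw [← hstep, RingEquiv.apply_symm_apply, RingEquiv.apply_symm_apply,
      htrans b.1 b.2 (p ^ i) (p ^ (i + 1)) (Nat.pow_le_pow_right hp.one_le (Nat.le_succ i))]
  · intro a
    apply Subtype.ext
    funext i
    show (e i).symm (Ideal.Quotient.factor _ (e (p ^ i) (a.1 (p ^ i)))) = a.1 i
    rw [hEA a.1 a.2 i (p ^ i) (hle1 i), RingEquiv.symm_apply_apply]
  · intro b
    apply Subtype.ext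
    funext n
    show Ideal.Quotient.factor _ (e n ((e n).symm (b.1 (p ^ n)))) = b.1 n
    rw [RingEquiv.apply_symm_apply, htrans b.1 b.2 n (p ^ n) (hle1 n)]
  · intro a b
    apply Subtype.ext
    funext n
    show Ideal.Quotient.factor _ (e n (a.1 n * b.1 n)) = _
    rw [map_mul, map_mul]
    rfl
  · intro a b
    apply Subtype.ext
    funext n
    show Ideal.Quotient.factor _ (e n (a.1 n + b.1 n)) = _
    rw [map_add, map_add]
    rfl

end PaperTower
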